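/- For every β ∈ (1,2] and α ∈ [0, 2−β], the β-transformation T_{β,α}(x) = βx + α (mod 1) on [0,1] does not have shadowing. -/

import Mathlib

/-- `f` has shadowing on `K` (infinite pseudo-orbits). -/
def ShadowingOn (f : ℝ → ℝ) (K : Set ℝ) : Prop :=
  ∀ ε > (0:ℝ), ∃ δ > (0:ℝ), ∀ x : ℕ → ℝ, (∀ i, x i ∈ K) →
    (∀ i, |f (x i) - x (i + 1)| < δ) →
    ∃ z ∈ K, ∀ i, |f^[i] z - x i| < ε

/-- The β-transformation `x ↦ βx + α (mod 1)`. -/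
noncomputable def betaMap (β α : ℝ) : ℝ → ℝ := fun x => Int.fract (β * x + α)

theorem betaMap_no_shadowing
    (β α : ℝ) (hβ1 : 1 < β) (hβ2 : β ≤ 2) (hα0 : 0 ≤ α) (hα1 : α ≤ 2 - β) :
    ¬ ShadowingOn (betaMap β α) (Set.Icc 0 1) := by
  intro hsh
  have hβ0 : (0:ℝ) < β := lt_trans one_pos hβ1
  set T : ℝ → ℝ := betaMap β α with hT
  set ε : ℝ := 1 / (2 * (β + 1)) with hε
  have hεpos : 0 < ε := by positivity
  have hε1 : β * ε + ε = 1 / 2 := by rw [hε]; field_simp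
  obtain ⟨δ, hδ, H⟩ := hsh ε hεpos
  set c : ℝ := (1 - α) / β with hc
  have hc0 : 0 < c := div_pos (by linarith) hβ0
  have hc1 : c ≤ 1 := by rw [div_le_one hβ0]; linarith
  have hcval : β * c + α = 1 := by rw [hc]; field_simp; ring
  set η : ℝ := min c δ / (2 * β) with hη
  have hmin : 0 < min c δ := lt_min hc0 hδ
  have hηpos : 0 < η := by positivity
  have hβη : β * η = min c δ / 2 := by rw [hη]; field_simp
  have hβη1 : β * η ≤ 1 / 2 := by
    rw [hβη]; have := min_le_left c δ; linarith
  have hβηδ : β * η < δ := by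
    rw [hβη]; have := min_le_right c δ; linarith
  have hηc : η < c := by
    have h1 : η ≤ β * η := by nlinarith
    have h2 : β * η ≤ c / 2 := by
      rw [hβη]; have := min_le_left c δ; linarith
    linarith
  -- the pseudo-orbit
  set x : ℕ → ℝ := fun i => Nat.casesOn i (c - η) (fun n => T^[n] 1) with hx
  have hx0 : x 0 = c - η := rfl
  have hxs : ∀ n, x (n + 1) = T^[n] 1 := fun n => rfl
  have hfract_mem : ∀ y : ℝ, Int.fract y ∈ Set.Icc (0:ℝ) 1 :=
    fun y => ⟨Int.fract_nonneg y, (Int.fract_lt_one y).le⟩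
  have hTmem : ∀ y : ℝ, T y ∈ Set.Icc (0:ℝ) 1 := fun y => hfract_mem _
  have hxmem : ∀ i, x i ∈ Set.Icc (0:ℝ) 1 := by
    intro i
    cases i with
    | zero =>
      rw [hx0]
      constructor <;> [linarith; linarith]
    | succ n =>
      rw [hxs n]
      cases n with
      | zero =>
        simp only [Function.iterate_zero, id_eq]
        exact ⟨zero_le_one, le_refl 1⟩
      | succ m =>
        rw [Function.iterate_succ_apply']
        exact hTmem _
  have hTx0 : T (x 0) = 1 - β * η := by
    rw [hx0, hT]
    show Int.fract (β * (c - η) + α) = 1 - β * η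
    have : β * (c - η) + α = 1 - β * η := by rw [mul_sub]; linarith
    rw [this]
    apply Int.fract_eq_self.2
    constructor
    · linarith [hβη1]
    · have := mul_pos hβ0 hηpos; linarith
  have hpseudo : ∀ i, |T (x i) - x (i + 1)| < δ := by
    intro i
    cases i with
    | zero =>
      rw [hTx0, hxs 0]
      simp only [Function.iterate_zero, id_eq]
      rw [show (1 : ℝ) - β * η - 1 = -(β * η) by ring, abs_neg,
        abs_of_pos (mul_pos hβ0 hηpos)]
      exact hβηδ
    | succ n =>
      rw [hxs n, hxs (n + 1), Function.iterate_succ_apply', sub_self, abs_zero]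
      exact hδ
  obtain ⟨z, hz, hshadow⟩ := H x hxmem hpseudo
  -- the shadowing point leads to a contradiction
  set w : ℝ := T z with hw
  have hw1 : w < 1 := Int.fract_lt_one _
  set e : ℕ → ℝ := fun k => T^[k] 1 - T^[k] w with he
  have he0 : e 0 = 1 - w := by simp [he]
  have he0pos : 0 < e 0 := by rw [he0]; linarith
  have hsmall : ∀ k, |e k| < ε := by
    intro k
    have h1 := hshadow (k + 1)
    rw [hxs k, Function.iterate_succ_apply] at h1
    rw [he, abs_sub_comm]
    exact h1
  have hstep : ∀ k, e (k + 1) = β * e k := by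
    intro k
    set a : ℝ := T^[k] 1 with ha
    set b : ℝ := T^[k] w with hb
    have hea : e k = a - b := rfl
    have heb : e (k + 1) = Int.fract (β * a + α) - Int.fract (β * b + α) := by
      rw [he]
      simp only [Function.iterate_succ_apply']
      rfl
    set m : ℤ := ⌊β * a + α⌋ - ⌊β * b + α⌋ with hm
    have hekey : e (k + 1) = β * e k - (m : ℤ) := by
      rw [heb, hea, hm, Int.fract, Int.fract]
      push_cast
      ring
    have hmabs : |(m : ℝ)| < 1 := by
      have h1 : |e k| < ε := hsmall k
      have h2 : |e (k + 1)| < ε := hsmall (k + 1)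
      have : (m : ℝ) = β * e k - e (k + 1) := by rw [hekey]; push_cast; ring
      rw [this]
      calc |β * e k - e (k + 1)| ≤ β * |e k| + |e (k + 1)| := by
            rw [← abs_of_pos hβ0, ← abs_mul, abs_of_pos hβ0]
            exact abs_sub _ _
        _ < β * ε + ε := by
            have := mul_lt_mul_of_pos_left h1 hβ0
            linarith
        _ < 1 := by rw [hε1]; norm_num
    have hm0 : m = 0 := by
      have h2 : ((|m| : ℤ) : ℝ) < 1 := by rw [Int.cast_abs]; exact hmabs
      have h3 : |m| < 1 := by exact_mod_cast h2
      exact Int.abs_lt_one_iff.1 h3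
    rw [hekey, hm0]
    push_cast
    ring
  have hgeom : ∀ k, e k = β ^ k * e 0 := by
    intro k
    induction k with
    | zero => simp
    | succ n ih => rw [hstep n, ih, pow_succ]; ring
  obtain ⟨n, hn⟩ := pow_unbounded_of_one_lt (ε / e 0) hβ1
  have hcontra : ε < e n := by
    rw [hgeom n]
    have := (div_lt_iff₀ he0pos).1 hn
    linarith
  have := hsmall n
  have := le_abs_self (e n)
  linarith
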